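/- Define β = (1−V²)^((2−γ)/2)/G₊ and R₄ = η·σ₁/(β²·Ω²). Along any solution of the reduced tilted Bianchi type VIII system with Ω > 0 and V² < 1 for all τ, R₄ is differentiable and satisfies R₄' = 6(γ−1)·R₄. In particular, for γ = 1 the quantity η·σ₁/(β²Ω²) is constant along solutions. -/

import Mathlib

noncomputable section

/-- State of the reduced tilted Bianchi type VIII system: real variables
`Sp` (= Σ₊), `σ1`, `η`, `M`, `Om` (= Ω), `v1`, `v2`, functions of τ. -/
structure ReducedVIII (γ : ℝ) (I : Set ℝ) where
  Sp : ℝ → ℝ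
  σ1 : ℝ → ℝ
  η : ℝ → ℝ
  M : ℝ → ℝ
  Om : ℝ → ℝ
  v1 : ℝ → ℝ
  v2 : ℝ → ℝ

namespace ReducedVIII

variable {γ : ℝ} {I : Set ℝ}

/-- V² = v₁² + v₂² -/
def V2 (S : ReducedVIII γ I) (τ : ℝ) : ℝ := S.v1 τ ^ 2 + S.v2 τ ^ 2

/-- G₊ = 1 + (γ−1)V² -/
def Gp (S : ReducedVIII γ I) (τ : ℝ) : ℝ := 1 + (γ - 1) * S.V2 τ

/-- Q = 2Σ₊² + σ₁ + (1/2)((3γ−2)+(2−γ)V²)Ω/G₊ -/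
def Q (S : ReducedVIII γ I) (τ : ℝ) : ℝ :=
  2 * S.Sp τ ^ 2 + S.σ1 τ + (1/2) * ((3*γ - 2) + (2 - γ) * S.V2 τ) * S.Om τ / S.Gp τ

/-- W = V²𝒮 = (−2v₁² + v₂²)Σ₊ -/
def W (S : ReducedVIII γ I) (τ : ℝ) : ℝ := (-2 * S.v1 τ ^ 2 + S.v2 τ ^ 2) * S.Sp τ

/-- T = ((3γ−4)(1−V²) + (2−γ)W)/(1−(γ−1)V²) -/
def T (S : ReducedVIII γ I) (τ : ℝ) : ℝ :=
  ((3*γ - 4) * (1 - S.V2 τ) + (2 - γ) * S.W τ) / (1 - (γ - 1) * S.V2 τ)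

/-- The evolution equations and the constraint of the reduced system, holding
at each τ in the interval `I`. -/
structure IsSolution (S : ReducedVIII γ I) : Prop where
  hSp : ∀ τ ∈ I, HasDerivAt S.Sp
    ((S.Q τ - 2) * S.Sp τ + S.η τ - S.σ1 τ
      + γ * S.Om τ / (2 * S.Gp τ) * (-2 * S.v1 τ ^ 2 + S.v2 τ ^ 2)) τ
  hσ1 : ∀ τ ∈ I, HasDerivAt S.σ1 (2 * (S.Q τ + S.Sp τ - 1) * S.σ1 τ) τ
  hη : ∀ τ ∈ I, HasDerivAt S.η (2 * (S.Q τ - S.Sp τ) * S.η τ) τ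
  hM : ∀ τ ∈ I, HasDerivAt S.M (-(S.Q τ + 2 * S.Sp τ) * S.M τ) τ
  hOm : ∀ τ ∈ I, HasDerivAt S.Om
    (S.Om τ / S.Gp τ * (2 * S.Q τ - (3*γ - 2)
      + (2 * S.Q τ * (γ - 1) - (2 - γ)) * S.V2 τ - γ * S.W τ)) τ
  hv1 : ∀ τ ∈ I, HasDerivAt S.v1 ((S.T τ + 2 * S.Sp τ) * S.v1 τ) τ
  hv2 : ∀ τ ∈ I, HasDerivAt S.v2 ((S.T τ - S.Sp τ) * S.v2 τ) τ
  hC : ∀ τ ∈ I, 1 = S.Sp τ ^ 2 + S.σ1 τ + S.η τ + S.Om τ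

end ReducedVIII

/-- R₄ = η·σ₁/(β²·Ω²), with β = (1−V²)^((2−γ)/2)/G₊. -/
noncomputable def R4 {γ : ℝ} {I : Set ℝ} (S : ReducedVIII γ I) (τ : ℝ) : ℝ :=
  S.η τ * S.σ1 τ / (((1 - S.V2 τ) ^ ((2 - γ)/2) / S.Gp τ) ^ 2 * S.Om τ ^ 2)

set_option maxHeartbeats 1000000 in
/-- Along any solution of the reduced system with Ω > 0 and
V² < 1, R₄ = ησ₁/(β²Ω²) is differentiable with R₄' = 6(γ−1)·R₄; in particular,
for γ = 1 it is constant along solutions. -/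
theorem reducedVIII_R4_deriv (γ : ℝ) (hγ0 : 0 < γ) (hγ2 : γ < 2)
    (τ₀ : ℝ) (S : ReducedVIII γ (Set.Ici τ₀)) (hsol : S.IsSolution)
    (hOm : ∀ τ ∈ Set.Ici τ₀, 0 < S.Om τ)
    (hV : ∀ τ ∈ Set.Ici τ₀, S.V2 τ < 1) :
    (∀ τ ∈ Set.Ici τ₀, HasDerivAt (R4 S) (6 * (γ - 1) * R4 S τ) τ) ∧
    (γ = 1 → ∀ τ₁ ∈ Set.Ici τ₀, ∀ τ₂ ∈ Set.Ici τ₀, R4 S τ₁ = R4 S τ₂) := by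
  have key : ∀ τ ∈ Set.Ici τ₀, HasDerivAt (R4 S) (6 * (γ - 1) * R4 S τ) τ := by
    intro τ hτ
    have hV2nn : (0:ℝ) ≤ S.V2 τ := by
      unfold ReducedVIII.V2; positivity
    have hVlt : S.V2 τ < 1 := hV τ hτ
    have h1V : (0:ℝ) < 1 - S.V2 τ := by linarith
    have hGpos : (0:ℝ) < S.Gp τ := by
      unfold ReducedVIII.Gp; nlinarith
    have hHpos : (0:ℝ) < 1 - (γ - 1) * S.V2 τ := by nlinarith
    have hOmpos := hOm τ hτ
    have hApos : (0:ℝ) < (1 - S.V2 τ) ^ ((2 - γ)/2) := Real.rpow_pos_of_pos h1V _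
    have hGne : S.Gp τ ≠ 0 := ne_of_gt hGpos
    have h1Vne : (1:ℝ) - S.V2 τ ≠ 0 := ne_of_gt h1V
    have hOmne : S.Om τ ≠ 0 := ne_of_gt hOmpos
    have hAne : (1 - S.V2 τ) ^ ((2 - γ)/2) ≠ 0 := ne_of_gt hApos
    -- derivatives of the basic variables
    have hv1' := hsol.hv1 τ hτ
    have hv2' := hsol.hv2 τ hτ
    have hη' := hsol.hη τ hτ
    have hσ1' := hsol.hσ1 τ hτ
    have hOm' := hsol.hOm τ hτ
    set Vd : ℝ := 2 * S.v1 τ * ((S.T τ + 2 * S.Sp τ) * S.v1 τ)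
        + 2 * S.v2 τ * ((S.T τ - S.Sp τ) * S.v2 τ) with hVd
    set Z : ℝ := 2 * S.Q τ - (3*γ - 2)
        + (2 * S.Q τ * (γ - 1) - (2 - γ)) * S.V2 τ - γ * S.W τ with hZ
    -- derivative of V²
    have hV2' : HasDerivAt S.V2 Vd τ := by
      have h := (hv1'.pow 2).add (hv2'.pow 2)
      have he : S.V2 = fun t => S.v1 t ^ 2 + S.v2 t ^ 2 := rfl
      rw [he]
      refine h.congr_deriv ?_
      rw [hVd]; ring
    -- derivative of 1 - V²
    have h1V' : HasDerivAt (fun t => 1 - S.V2 t) (-Vd) τ := by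
      exact hV2'.const_sub 1
    -- derivative of A = (1-V²)^((2-γ)/2)
    have hA' : HasDerivAt (fun t => (1 - S.V2 t) ^ ((2 - γ)/2))
        (-Vd * ((2 - γ)/2) * ((1 - S.V2 τ) ^ ((2 - γ)/2) / (1 - S.V2 τ))) τ := by
      have h := h1V'.rpow_const (p := (2 - γ)/2) (Or.inl h1Vne)
      have hrw : (1 - S.V2 τ) ^ ((2 - γ)/2 - 1)
          = (1 - S.V2 τ) ^ ((2 - γ)/2) / (1 - S.V2 τ) :=
        Real.rpow_sub_one h1Vne _
      rw [hrw] at h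
      exact h
    -- derivative of G₊
    have hG' : HasDerivAt S.Gp ((γ - 1) * Vd) τ := by
      have he : S.Gp = fun t => 1 + (γ - 1) * S.V2 t := rfl
      rw [he]
      exact (hV2'.const_mul (γ - 1)).const_add 1
    -- derivative of β = A / G₊
    have hβ' := hA'.div hG' hGne
    -- derivative of D = β² Ω², in the form D · m
    set m : ℝ := -Vd * ((2 - γ)/(1 - S.V2 τ) + 2 * (γ - 1)/S.Gp τ)
        + 2 * Z / S.Gp τ with hm
    have hD' : HasDerivAt
        (fun t => ((1 - S.V2 t) ^ ((2 - γ)/2) / S.Gp t) ^ 2 * S.Om t ^ 2)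
        ((((1 - S.V2 τ) ^ ((2 - γ)/2) / S.Gp τ) ^ 2 * S.Om τ ^ 2) * m) τ := by
      have h := (hβ'.pow 2).mul (hOm'.pow 2)
      refine h.congr_deriv ?_
      rw [hm]
      simp only [Pi.div_apply, Pi.pow_apply]
      field_simp
      ring_nf
      field_simp
      ring
    -- derivative of N = η σ₁
    have hN' : HasDerivAt (fun t => S.η t * S.σ1 t)
        ((4 * S.Q τ - 2) * (S.η τ * S.σ1 τ)) τ := by
      refine (hη'.mul hσ1').congr_deriv ?_
      ring
    have hDne : ((1 - S.V2 τ) ^ ((2 - γ)/2) / S.Gp τ) ^ 2 * S.Om τ ^ 2 ≠ 0 :=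
      mul_ne_zero (pow_ne_zero _ (div_ne_zero hAne hGne)) (pow_ne_zero _ hOmne)
    have hR4' := hN'.div hD' hDne
    -- the scalar identity
    have hid : 4 * S.Q τ - 2 - m = 6 * (γ - 1) := by
      have hGne' : (1:ℝ) + (γ - 1) * (S.v1 τ ^ 2 + S.v2 τ ^ 2) ≠ 0 := hGne
      have hHne' : (1:ℝ) - (γ - 1) * (S.v1 τ ^ 2 + S.v2 τ ^ 2) ≠ 0 := ne_of_gt hHpos
      have h1Vne' : (1:ℝ) - (S.v1 τ ^ 2 + S.v2 τ ^ 2) ≠ 0 := h1Vne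
      rw [hm, hZ, hVd]
      unfold ReducedVIII.Q ReducedVIII.T ReducedVIII.W
      have hHne'' : (1:ℝ) - (γ - 1) * S.V2 τ ≠ 0 := ne_of_gt hHpos
      generalize hHdef : 1 - (γ - 1) * S.V2 τ = H at hHne'' ⊢
      generalize hUdef : 1 - S.V2 τ = U at h1Vne ⊢
      generalize hGdef : S.Gp τ = G at hGne ⊢
      field_simp
      subst hHdef hUdef hGdef
      unfold ReducedVIII.Gp ReducedVIII.V2
      ring
    -- assemble
    have hfun : R4 S = fun t => S.η t * S.σ1 t /
        (((1 - S.V2 t) ^ ((2 - γ)/2) / S.Gp t) ^ 2 * S.Om t ^ 2) := rfl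
    rw [hfun]
    refine hR4'.congr_deriv ?_
    rw [show (6:ℝ) * (γ - 1) = 4 * S.Q τ - 2 - m from hid.symm]
    field_simp
  refine ⟨key, ?_⟩
  intro hγ1 τ₁ hτ₁ τ₂ hτ₂
  subst hγ1
  have hzero : ∀ τ ∈ Set.Ici τ₀, HasDerivAt (R4 S) 0 τ := by
    intro τ hτ
    simpa using key τ hτ
  have hdiff : DifferentiableOn ℝ (R4 S) (Set.Ici τ₀) := fun x hx =>
    (hzero x hx).differentiableAt.differentiableWithinAt
  refine (convex_Ici τ₀).is_const_of_fderivWithin_eq_zero hdiff ?_ hτ₁ hτ₂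
  intro x hx
  have hu : UniqueDiffWithinAt ℝ (Set.Ici τ₀) x := uniqueDiffOn_Ici τ₀ x hx
  have h2 := ((hzero x hx).hasDerivWithinAt.hasFDerivWithinAt).fderivWithin hu
  rw [h2]
  ext y
  simp
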